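/- With n, m, p and E₀,…,E₄ as defined, the φ-derivatives satisfy: ∂_φE₀ = −sinθ E₁, ∂_φE₁ = 3 sinθ E₀ + cosθ E₂ + sinθ E₄, ∂_φE₂ = −cosθ E₁ − sinθ E₃, ∂_φE₃ = sinθ E₂ + 2cosθ E₄, ∂_φE₄ = −sinθ E₁ − 2cosθ E₃. -/

import Mathlib

open Real Matrix

noncomputable def nVec (θ φ : ℝ) : Fin 3 → ℝ := ![sin θ * cos φ, sin θ * sin φ, cos θ]
noncomputable def mVec (θ φ : ℝ) : Fin 3 → ℝ := ![cos θ * cos φ, cos θ * sin φ, -sin θ]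
noncomputable def pVec (θ φ : ℝ) : Fin 3 → ℝ := ![sin φ, -cos φ, 0]

noncomputable def E0 (θ φ : ℝ) : Matrix (Fin 3) (Fin 3) ℝ :=
  vecMulVec (nVec θ φ) (nVec θ φ) - (1/3 : ℝ) • (1 : Matrix (Fin 3) (Fin 3) ℝ)
noncomputable def E1 (θ φ : ℝ) : Matrix (Fin 3) (Fin 3) ℝ :=
  vecMulVec (nVec θ φ) (pVec θ φ) + vecMulVec (pVec θ φ) (nVec θ φ)
noncomputable def E2 (θ φ : ℝ) : Matrix (Fin 3) (Fin 3) ℝ :=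
  vecMulVec (nVec θ φ) (mVec θ φ) + vecMulVec (mVec θ φ) (nVec θ φ)
noncomputable def E3 (θ φ : ℝ) : Matrix (Fin 3) (Fin 3) ℝ :=
  vecMulVec (mVec θ φ) (pVec θ φ) + vecMulVec (pVec θ φ) (mVec θ φ)
noncomputable def E4 (θ φ : ℝ) : Matrix (Fin 3) (Fin 3) ℝ :=
  vecMulVec (mVec θ φ) (mVec θ φ) - vecMulVec (pVec θ φ) (pVec θ φ)

lemma hnd (θ φ : ℝ) (i : Fin 3) :
    HasDerivAt (fun s => nVec θ s i) (-sin θ * pVec θ φ i) φ := by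
  fin_cases i <;> simp [nVec, pVec] <;>
  · first
    | exact hasDerivAt_const _ _
    | exact ((hasDerivAt_cos φ).const_mul (sin θ)).congr_deriv (by ring1)
    | exact ((hasDerivAt_sin φ).const_mul (sin θ)).congr_deriv (by ring1)

lemma hmd (θ φ : ℝ) (i : Fin 3) :
    HasDerivAt (fun s => mVec θ s i) (-cos θ * pVec θ φ i) φ := by
  fin_cases i <;> simp [mVec, pVec] <;>
  · first
    | exact hasDerivAt_const _ _
    | exact ((hasDerivAt_cos φ).const_mul (cos θ)).congr_deriv (by ring1)
    | exact ((hasDerivAt_sin φ).const_mul (cos θ)).congr_deriv (by ring1)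

lemma hpd (θ φ : ℝ) (i : Fin 3) :
    HasDerivAt (fun s => pVec θ s i)
      (sin θ * nVec θ φ i + cos θ * mVec θ φ i) φ := by
  fin_cases i <;> simp [nVec, mVec, pVec]
  · convert hasDerivAt_sin φ using 1
    linear_combination cos φ * sin_sq_add_cos_sq θ
  · refine (hasDerivAt_cos φ).neg.congr_deriv (Eq.symm ?_)
    linear_combination sin φ * sin_sq_add_cos_sq θ
  · exact (hasDerivAt_const φ (0:ℝ)).congr_deriv (by ring)

set_option maxHeartbeats 1000000 in
theorem stmt4 (θ φ : ℝ) (i j : Fin 3) :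
    HasDerivAt (fun s => E0 θ s i j) ((-sin θ • E1 θ φ) i j) φ ∧
    HasDerivAt (fun s => E1 θ s i j)
      (((3 * sin θ) • E0 θ φ + cos θ • E2 θ φ + sin θ • E4 θ φ) i j) φ ∧
    HasDerivAt (fun s => E2 θ s i j) ((-cos θ • E1 θ φ - sin θ • E3 θ φ) i j) φ ∧
    HasDerivAt (fun s => E3 θ s i j) ((sin θ • E2 θ φ + (2 * cos θ) • E4 θ φ) i j) φ ∧
    HasDerivAt (fun s => E4 θ s i j) ((-sin θ • E1 θ φ - (2 * cos θ) • E3 θ φ) i j) φ := by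
  refine ⟨?_, ?_, ?_, ?_, ?_⟩
  · have h := (((hnd θ φ i).mul (hnd θ φ j)).sub_const
      ((1/3 : ℝ) * (1 : Matrix (Fin 3) (Fin 3) ℝ) i j))
    convert h using 1
    clear h
    iterate 3 exact rfl
    fin_cases i <;> fin_cases j <;>
      simp [E0, E1, nVec, mVec, pVec, vecMulVec_apply, Matrix.one_apply] <;> ring
  · have h := ((hnd θ φ i).mul (hpd θ φ j)).add ((hpd θ φ i).mul (hnd θ φ j))
    convert h using 1
    clear h
    iterate 3 exact rfl
    fin_cases i <;> fin_cases j <;>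
      simp [E0, E1, E2, E4, nVec, mVec, pVec, vecMulVec_apply, Matrix.one_apply] <;>
      ring_nf <;> simp only [cos_sq'] <;> ring
  · have h := ((hnd θ φ i).mul (hmd θ φ j)).add ((hmd θ φ i).mul (hnd θ φ j))
    convert h using 1
    clear h
    iterate 3 exact rfl
    fin_cases i <;> fin_cases j <;>
      simp [E1, E2, E3, nVec, mVec, pVec, vecMulVec_apply] <;> ring
  · have h := ((hmd θ φ i).mul (hpd θ φ j)).add ((hpd θ φ i).mul (hmd θ φ j))
    convert h using 1
    clear h
    iterate 3 exact rfl
    fin_cases i <;> fin_cases j <;>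
      simp [E2, E3, E4, nVec, mVec, pVec, vecMulVec_apply] <;>
      ring_nf <;> simp only [cos_sq'] <;> ring
  · have h := ((hmd θ φ i).mul (hmd θ φ j)).sub ((hpd θ φ i).mul (hpd θ φ j))
    convert h using 1
    clear h
    iterate 3 exact rfl
    fin_cases i <;> fin_cases j <;>
      simp [E1, E3, E4, nVec, mVec, pVec, vecMulVec_apply] <;>
      ring_nf <;> simp only [cos_sq'] <;> ring
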